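/- Let k, t, r, m be natural numbers with t ≥ 1 and 1 ≤ k ≤ r ≤ m. Then |A_{k,t}| ≤ 2^{m·t·k + t·binom(m-k, ≤ r-k)}. -/

import Mathlib

open Finset
open scoped symmDiff

abbrev Cube (m : ℕ) := Fin m → ZMod 2
abbrev BF (m : ℕ) := Cube m → ZMod 2

/-- Codewords of RM(m,r): functions computed by a polynomial of total degree ≤ r. -/
def RM (m r : ℕ) : Set (BF m) :=
  {f | ∃ p : MvPolynomial (Fin m) (ZMod 2), p.totalDegree ≤ r ∧
    ∀ x, MvPolynomial.eval x p = f x}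

/-- Normalized weight of a Boolean function. -/
noncomputable def wt {m : ℕ} (f : BF m) : ℝ :=
  ((univ.filter fun x => f x = 1).card : ℝ) / 2 ^ m

/-- Bias of a Boolean function. -/
noncomputable def bias {m : ℕ} (f : BF m) : ℝ :=
  (∑ x : Cube m, if f x = 0 then (1 : ℝ) else -1) / 2 ^ m

/-- Number of codewords of RM(m,r) of weight at most β. -/
noncomputable def W (m r : ℕ) (β : ℝ) : ℕ :=
  Set.ncard {f : BF m | f ∈ RM m r ∧ wt f ≤ β}

/-- binom(n, ≤ k) = ∑_{i=0}^k C(n,i). -/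
def binomLe (n k : ℕ) : ℕ := ∑ i ∈ Finset.range (k + 1), n.choose i

/-- Discrete derivative of f in direction y: Δ_y f(x) = f(x+y) + f(x). -/
def DD {m : ℕ} (y : Cube m) (f : BF m) : BF m := fun x => f (x + y) + f x

/-- Iterated discrete derivative Δ_Y f = Δ_{y₁}Δ_{y₂}···Δ_{y_k} f for a tuple
Y = (y₁,…,y_k) of directions. -/
def DDs {m k : ℕ} (Y : Fin k → Cube m) (f : BF m) : BF m :=
  (List.ofFn Y).foldr DD f

/-- Majority of a finite family of F₂ values: 1 if at least half of the values
equal 1, and 0 otherwise. -/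
def Maj {ι : Type*} [Fintype ι] (v : ι → ZMod 2) : ZMod 2 :=
  if Fintype.card ι ≤ 2 * (Finset.univ.filter fun i => v i = 1).card then 1 else 0

/-- The net A_{k,t}: all pointwise majorities of t order-k derivatives of a
polynomial of degree at most r. -/
def Anet (m r k t : ℕ) : Set (BF m) :=
  {g | ∃ f ∈ RM m r, ∃ Y : Fin t → Fin k → Cube m,
    g = fun x => Maj fun i => DDs (Y i) f x}

namespace AnetAux

lemma z2 : ∀ a : ZMod 2, a + a = 0 := by decide
lemma cube_add_self {m : ℕ} (x : Cube m) : x + x = 0 := funext fun _ => z2 _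

lemma sum_symmDiff_char2 {ι M : Type*} [DecidableEq ι] [AddCommGroup M]
    (h2 : ∀ v : M, v + v = 0) (S T : Finset ι) (v : ι → M) :
    ∑ i ∈ S ∆ T, v i = (∑ i ∈ S, v i) + ∑ i ∈ T, v i := by
  have hdisj : Disjoint (S ∆ T) (S ∩ T) := disjoint_symmDiff_inf S T
  have hu : (S ∆ T) ∪ (S ∩ T) = S ∪ T := by
    simpa using symmDiff_sup_inf S T
  have h1 : (∑ i ∈ S ∆ T, v i) + ∑ i ∈ S ∩ T, v i = ∑ i ∈ S ∪ T, v i := by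
    rw [← Finset.sum_union hdisj, hu]
  have h3 : (∑ i ∈ S ∪ T, v i) + ∑ i ∈ S ∩ T, v i = (∑ i ∈ S, v i) + ∑ i ∈ T, v i :=
    Finset.sum_union_inter
  calc ∑ i ∈ S ∆ T, v i
      = (∑ i ∈ S ∆ T, v i) + ((∑ i ∈ S ∩ T, v i) + (∑ i ∈ S ∩ T, v i)) := by
        rw [h2, add_zero]
    _ = ((∑ i ∈ S ∆ T, v i) + (∑ i ∈ S ∩ T, v i)) + (∑ i ∈ S ∩ T, v i) := (add_assoc _ _ _).symm
    _ = (∑ i ∈ S, v i) + ∑ i ∈ T, v i := by rw [h1, h3]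

lemma DDs_succ {m n : ℕ} (Z : Fin (n+1) → Cube m) (f : BF m) :
    DDs Z f = DD (Z 0) (DDs (fun i => Z i.succ) f) := by
  simp [DDs, List.ofFn_succ]

lemma sum_powerset_map {n : ℕ} (F : Finset (Fin (n+1)) → ZMod 2) :
    ∑ t ∈ ((univ : Finset (Fin n)).map (Fin.succEmb n)).powerset, F t
      = ∑ S : Finset (Fin n), F (S.map (Fin.succEmb n)) := by
  rw [← Finset.powerset_univ]
  refine (Finset.sum_bij (fun S _ => S.map (Fin.succEmb n)) ?_ ?_ ?_ ?_).symm
  · intro S _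
    exact Finset.mem_powerset.mpr (Finset.map_subset_map.mpr (Finset.subset_univ S))
  · intro S₁ _ S₂ _ h; exact Finset.map_injective _ h
  · intro t ht
    rcases Finset.subset_map_iff.mp (Finset.mem_powerset.mp ht) with ⟨u, -, rfl⟩
    exact ⟨u, by simp, rfl⟩
  · intros; rfl

lemma DDs_eq_sum {m : ℕ} : ∀ {k : ℕ} (Z : Fin k → Cube m) (f : BF m) (x : Cube m),
    DDs Z f x = ∑ S : Finset (Fin k), f (x + ∑ i ∈ S, Z i) := by
  intro k
  induction k with
  | zero =>
      intro Z f x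
      have : (univ : Finset (Finset (Fin 0))) = {∅} := rfl
      rw [this, Finset.sum_singleton, Finset.sum_empty, add_zero]
      simp [DDs, List.ofFn_zero]
  | succ n ih =>
      intro Z f x
      have h0 : (0 : Fin (n+1)) ∉ (univ : Finset (Fin n)).map (Fin.succEmb n) := by
        simp [Fin.succ_ne_zero]
      have hR : ∑ S : Finset (Fin (n+1)), f (x + ∑ i ∈ S, Z i)
          = (∑ S : Finset (Fin n), f (x + ∑ i ∈ S, Z i.succ))
            + ∑ S : Finset (Fin n), f (x + Z 0 + ∑ i ∈ S, Z i.succ) := by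
        have huniv : (univ : Finset (Fin (n+1))) = insert 0 ((univ : Finset (Fin n)).map (Fin.succEmb n)) := by
          ext j
          simp only [Finset.mem_univ, true_iff, Finset.mem_insert, Finset.mem_map]
          rcases Fin.eq_zero_or_eq_succ j with h | ⟨i, rfl⟩
          · exact Or.inl h
          · exact Or.inr ⟨i, trivial, rfl⟩
        rw [show (univ : Finset (Finset (Fin (n+1)))) =
            (univ : Finset (Fin (n+1))).powerset from (Finset.powerset_univ).symm,
          huniv, Finset.sum_powerset_insert h0, sum_powerset_map, sum_powerset_map]
        congr 1
        · apply Finset.sum_congr rfl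
          intro S _
          rw [Finset.sum_map]
          rfl
        · apply Finset.sum_congr rfl
          intro S _
          have h0S : (0 : Fin (n+1)) ∉ S.map (Fin.succEmb n) := by
            simp [Fin.succ_ne_zero]
          rw [Finset.sum_insert h0S, Finset.sum_map, ← add_assoc]
          rfl
      rw [hR, DDs_succ]
      show DDs (fun i => Z i.succ) f (x + Z 0) + DDs (fun i => Z i.succ) f x = _
      rw [ih, ih]
      rw [add_comm]

end AnetAux

namespace Part2
open AnetAux

lemma zmod2_cases : ∀ a : ZMod 2, a = 0 ∨ a = 1 := by decide
lemma zmod2_ite : ∀ a : ZMod 2, a = if a = 1 then 1 else 0 := by decide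

lemma DDs_eq_zero_of_dep {m k : ℕ} (Z : Fin k → Cube m)
    (hZ : ¬ LinearIndependent (ZMod 2) Z) (f : BF m) (x : Cube m) : DDs Z f x = 0 := by
  rw [DDs_eq_sum]
  obtain ⟨g, hsum, i0, hi0⟩ := Fintype.not_linearIndependent_iff.mp hZ
  set T : Finset (Fin k) := univ.filter (fun i => g i = 1) with hT
  have hTne : T.Nonempty := by
    refine ⟨i0, ?_⟩
    have h1 : g i0 = 1 := by
      rcases zmod2_cases (g i0) with h | h
      exacts [absurd h hi0, h]
    simp only [hT, Finset.mem_filter]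
    exact ⟨Finset.mem_univ _, h1⟩
  have hsumT : ∑ i ∈ T, Z i = 0 := by
    have heq : ∑ i ∈ T, Z i = ∑ i : Fin k, g i • Z i := by
      rw [hT, Finset.sum_filter]
      refine Finset.sum_congr rfl fun i _ => ?_
      rcases zmod2_cases (g i) with h | h <;> simp [h]
    exact heq.trans hsum
  refine Finset.sum_involution (fun S _ => S ∆ T) ?_ ?_ (fun S _ => Finset.mem_univ _) ?_
  · intro S _
    have : ∑ i ∈ S ∆ T, Z i = ∑ i ∈ S, Z i := by
      rw [sum_symmDiff_char2 cube_add_self, hsumT, add_zero]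
    rw [this]
    exact z2 _
  · intro S _ _
    intro hST
    have : T = ⊥ := by
      have := symmDiff_eq_left.mp hST
      exact this
    exact (Finset.nonempty_iff_ne_empty.mp hTne) this
  · intro S _
    exact symmDiff_symmDiff_cancel_right T S

variable {m k : ℕ}

def stdE (hkm : k ≤ m) : Fin k → Cube m := fun i => Pi.single (Fin.castLE hkm i) 1

def resC (hkm : k ≤ m) (x : Cube m) : Cube (m - k) :=
  fun j => x ⟨k + j.1, by omega⟩

def iotaC (x : Cube (m - k)) : Cube m :=
  fun j => if h : k ≤ j.1 then x ⟨j.1 - k, by omega⟩ else 0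

def Mon {n : ℕ} (T : Finset (Fin n)) (w : Cube n) : ZMod 2 := ∏ i ∈ T, w i

lemma eS_apply (hkm : k ≤ m) (S : Finset (Fin k)) (j : Fin m) :
    (∑ i ∈ S, stdE hkm i) j
      = if h : j.1 < k then (if (⟨j.1, h⟩ : Fin k) ∈ S then 1 else 0) else 0 := by
  rw [Finset.sum_apply]
  by_cases h : j.1 < k
  · rw [dif_pos h]
    have : ∀ i ∈ S, stdE hkm i j = if i = ⟨j.1, h⟩ then 1 else 0 := by
      intro i _
      simp only [stdE, Pi.single_apply]
      congr 1
      simp only [eq_iff_iff]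
      constructor
      · intro he; exact Fin.ext (by simpa [Fin.ext_iff] using he.symm)
      · intro he; exact Fin.ext (by simpa [Fin.ext_iff] using he.symm)
    rw [Finset.sum_congr rfl this, Finset.sum_ite_eq' S (⟨j.1, h⟩ : Fin k) (fun _ => 1)]
  · rw [dif_neg h]
    refine Finset.sum_eq_zero fun i _ => ?_
    simp only [stdE, Pi.single_apply]
    have hne : j ≠ Fin.castLE hkm i := by
      intro he
      exact h (by rw [he]; exact i.2)
    simp [hne]

end Part2

namespace Part3
open AnetAux Part2

variable {m k : ℕ}

lemma DDs_stdE_invariant (hkm : k ≤ m) (g : BF m) (u : Cube m) :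
    DDs (stdE hkm) g u = DDs (stdE hkm) g (iotaC (resC hkm u)) := by
  set D : Finset (Fin k) := univ.filter (fun i => u (Fin.castLE hkm i) = 1) with hD
  have hdecomp : u = iotaC (resC hkm u) + ∑ i ∈ D, stdE hkm i := by
    funext j
    rw [Pi.add_apply, eS_apply]
    by_cases h : j.1 < k
    · rw [dif_pos h]
      have hι : iotaC (resC hkm u) j = 0 := by
        rw [iotaC, dif_neg (by omega)]
      rw [hι, zero_add]
      have hcast : Fin.castLE hkm (⟨j.1, h⟩ : Fin k) = j := by
        apply Fin.ext; rfl
      simp only [hD, Finset.mem_filter, Finset.mem_univ, true_and, hcast]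
      exact zmod2_ite (u j)
    · rw [dif_neg h, add_zero]
      show u j = iotaC (resC hkm u) j
      rw [iotaC]
      rw [dif_pos (by omega : k ≤ j.1)]
      show u j = resC hkm u ⟨j.1 - k, by omega⟩
      rw [resC]
      congr 1
      exact Fin.ext (by simp; omega)
  conv_lhs => rw [hdecomp]
  rw [DDs_eq_sum, DDs_eq_sum]
  have hterm : ∀ S : Finset (Fin k),
      iotaC (resC hkm u) + ∑ i ∈ D, stdE hkm i + ∑ i ∈ S, stdE hkm i
        = iotaC (resC hkm u) + ∑ i ∈ D ∆ S, stdE hkm i := by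
    intro S
    rw [add_assoc, ← sum_symmDiff_char2 cube_add_self]
  calc ∑ S : Finset (Fin k),
        g (iotaC (resC hkm u) + ∑ i ∈ D, stdE hkm i + ∑ i ∈ S, stdE hkm i)
      = ∑ S : Finset (Fin k), g (iotaC (resC hkm u) + ∑ i ∈ D ∆ S, stdE hkm i) :=
        Finset.sum_congr rfl fun S _ => by rw [hterm]
    _ = ∑ S : Finset (Fin k), g (iotaC (resC hkm u) + ∑ i ∈ S, stdE hkm i) := by
        refine Fintype.sum_bijective (fun S => D ∆ S)
          (Function.Involutive.bijective fun S => symmDiff_symmDiff_cancel_left D S) _ _ ?_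
        intro S
        rfl

lemma DDs_comp_linear (hkm : k ≤ m) (Z : Fin k → Cube m) (A : Cube m ≃ₗ[ZMod 2] Cube m)
    (hA : ∀ i, A (stdE hkm i) = Z i) (f : BF m) (u : Cube m) :
    DDs Z f (A u) = DDs (stdE hkm) (fun v => f (A v)) u := by
  rw [DDs_eq_sum, DDs_eq_sum]
  refine Finset.sum_congr rfl fun S _ => ?_
  have : A (u + ∑ i ∈ S, stdE hkm i) = A u + ∑ i ∈ S, Z i := by
    rw [map_add, map_sum]
    congr 1
    exact Finset.sum_congr rfl fun i _ => hA i
  show f (A u + ∑ i ∈ S, Z i) = f (A (u + ∑ i ∈ S, stdE hkm i))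
  rw [this]

end Part3


namespace Part4
open AnetAux Part2 Part3 MvPolynomial

lemma sum_exponents_le {m r : ℕ} {p : MvPolynomial (Fin m) (ZMod 2)} (hdeg : p.totalDegree ≤ r)
    {a : Fin m →₀ ℕ} (ha : a ∈ p.support) : ∑ j : Fin m, a j ≤ r := by
  have h1 : a.sum (fun _ e => e) ≤ p.totalDegree := MvPolynomial.le_totalDegree ha
  have h2 : a.sum (fun _ e => e) = ∑ j : Fin m, a j := Finsupp.sum_fintype _ _ (fun _ => rfl)
  rw [← h2]
  exact h1.trans hdeg

lemma RM_comp_linear {m r : ℕ} (A : Cube m →ₗ[ZMod 2] Cube m) {f : BF m} (hf : f ∈ RM m r) :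
    (fun x => f (A x)) ∈ RM m r := by
  obtain ⟨p, hdeg, hev⟩ := hf
  set L : Fin m → MvPolynomial (Fin m) (ZMod 2) :=
    fun j => ∑ j' : Fin m, MvPolynomial.C (A (Pi.single j' 1) j) * MvPolynomial.X j' with hL
  refine ⟨∑ a ∈ p.support, MvPolynomial.C (MvPolynomial.coeff a p)
      * ∏ j : Fin m, (L j) ^ (a j), ?_, ?_⟩
  · refine (MvPolynomial.totalDegree_finset_sum _ _).trans ?_
    rw [Finset.sup_le_iff]
    intro a ha
    refine (MvPolynomial.totalDegree_mul _ _).trans ?_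
    rw [MvPolynomial.totalDegree_C, zero_add]
    refine (MvPolynomial.totalDegree_finset_prod _ _).trans ?_
    have hLdeg : ∀ j, (L j).totalDegree ≤ 1 := by
      intro j
      refine (MvPolynomial.totalDegree_finset_sum _ _).trans ?_
      rw [Finset.sup_le_iff]
      intro j' _
      refine (MvPolynomial.totalDegree_mul _ _).trans ?_
      rw [MvPolynomial.totalDegree_C, MvPolynomial.totalDegree_X]
    calc ∑ j : Fin m, ((L j) ^ (a j)).totalDegree
        ≤ ∑ j : Fin m, a j * 1 := Finset.sum_le_sum fun j _ =>
          (MvPolynomial.totalDegree_pow _ _).trans (Nat.mul_le_mul_left _ (hLdeg j))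
      _ = ∑ j : Fin m, a j := by simp
      _ ≤ r := sum_exponents_le hdeg ha
  · intro x
    have hsingle : ∀ (j' : Fin m) (c : ZMod 2), Pi.single j' c = c • (Pi.single j' 1 : Cube m) := by
      intro j' c
      funext j''
      rw [Pi.smul_apply, Pi.single_apply, Pi.single_apply, smul_eq_mul, mul_ite, mul_one, mul_zero]
    have hAx : ∀ j : Fin m, (A x) j = ∑ j' : Fin m, A (Pi.single j' 1) j * x j' := by
      intro j
      have hx : A x = ∑ j' : Fin m, x j' • A (Pi.single j' 1 : Cube m) := by
        conv_lhs => rw [show x = ∑ j' : Fin m, Pi.single j' (x j') from (Finset.univ_sum_single x).symm]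
        rw [map_sum]
        refine Finset.sum_congr rfl fun j' _ => ?_
        rw [hsingle j' (x j'), map_smul]
      rw [hx, Finset.sum_apply]
      refine Finset.sum_congr rfl fun j' _ => ?_
      rw [Pi.smul_apply, smul_eq_mul, mul_comm]
    have hLx : ∀ j : Fin m, MvPolynomial.eval x (L j) = (A x) j := by
      intro j
      rw [hL]
      simp only [map_sum, map_mul, MvPolynomial.eval_C, MvPolynomial.eval_X]
      exact (hAx j).symm
    rw [map_sum]
    have : ∀ a ∈ p.support, MvPolynomial.eval x (MvPolynomial.C (MvPolynomial.coeff a p)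
        * ∏ j : Fin m, (L j) ^ (a j))
          = MvPolynomial.coeff a p * ∏ j : Fin m, ((A x) j) ^ (a j) := by
      intro a _
      rw [map_mul, MvPolynomial.eval_C, map_prod]
      congr 1
      exact Finset.prod_congr rfl fun j _ => by rw [map_pow, hLx j]
    rw [Finset.sum_congr rfl this, ← MvPolynomial.eval_eq', hev]

end Part4

namespace Part5
open AnetAux Part2 Part3 Part4 MvPolynomial

variable {m k r : ℕ}

def liftJ (hkm : k ≤ m) (j' : Fin (m - k)) : Fin m := ⟨k + j'.1, by omega⟩

def Tof (hkm : k ≤ m) (a : Fin m →₀ ℕ) : Finset (Fin (m - k)) :=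
  univ.filter (fun j' => a (liftJ hkm j') ≠ 0)

lemma prod_high {M : Type*} [CommMonoid M] (hkm : k ≤ m) (F : Fin m → M) :
    ∏ j ∈ univ.filter (fun j : Fin m => ¬ j.1 < k), F j
      = ∏ j' : Fin (m - k), F (liftJ hkm j') := by
  refine (Finset.prod_bij (fun j' _ => liftJ hkm j') ?_ ?_ ?_ ?_).symm
  · intro j' _
    simp only [Finset.mem_filter, Finset.mem_univ, true_and, liftJ]
    omega
  · intro a _ b _ h
    have := congrArg Fin.val h
    simp only [liftJ] at this
    exact Fin.ext (by omega)
  · intro j hj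
    simp only [Finset.mem_filter, Finset.mem_univ, true_and] at hj
    refine ⟨⟨j.1 - k, by omega⟩, by simp, ?_⟩
    exact Fin.ext (by simp only [liftJ]; omega)
  · intros; rfl

lemma prod_low {M : Type*} [CommMonoid M] (hkm : k ≤ m) (F : Fin m → M) :
    ∏ j ∈ univ.filter (fun j : Fin m => j.1 < k), F j
      = ∏ i : Fin k, F (Fin.castLE hkm i) := by
  refine (Finset.prod_bij (fun i _ => Fin.castLE hkm i) ?_ ?_ ?_ ?_).symm
  · intro i _
    simp only [Finset.mem_filter, Finset.mem_univ, true_and]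
    exact i.2
  · intro a _ b _ h
    have h' := congrArg Fin.val h
    exact Fin.ext h'
  · intro j hj
    simp only [Finset.mem_filter, Finset.mem_univ, true_and] at hj
    exact ⟨⟨j.1, hj⟩, by simp, Fin.ext rfl⟩
  · intros; rfl

lemma sum_high {M : Type*} [AddCommMonoid M] (hkm : k ≤ m) (F : Fin m → M) :
    ∑ j ∈ univ.filter (fun j : Fin m => ¬ j.1 < k), F j
      = ∑ j' : Fin (m - k), F (liftJ hkm j') :=
  prod_high (M := Multiplicative M) hkm F

lemma sum_low {M : Type*} [AddCommMonoid M] (hkm : k ≤ m) (F : Fin m → M) :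
    ∑ j ∈ univ.filter (fun j : Fin m => j.1 < k), F j
      = ∑ i : Fin k, F (Fin.castLE hkm i) :=
  prod_low (M := Multiplicative M) hkm F

lemma zmod2_pow (x : ZMod 2) {e : ℕ} (he : e ≠ 0) : x ^ e = x := by
  rcases zmod2_cases x with h | h
  · rw [h, zero_pow he]
  · rw [h, one_pow]

end Part5

namespace Part5
open AnetAux Part2 Part3 Part4 MvPolynomial

variable {m k r : ℕ}

lemma card_Tof_le (hkm : k ≤ m) {p : MvPolynomial (Fin m) (ZMod 2)} (hdeg : p.totalDegree ≤ r)
    {a : Fin m →₀ ℕ} (ha : a ∈ p.support) (hK : ∀ i : Fin k, a (Fin.castLE hkm i) ≠ 0) :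
    (Tof hkm a).card ≤ r - k := by
  have htot : ∑ j : Fin m, a j ≤ r := sum_exponents_le hdeg ha
  have hsplit : (∑ j ∈ univ.filter (fun j : Fin m => j.1 < k), a j)
      + ∑ j ∈ univ.filter (fun j : Fin m => ¬ j.1 < k), a j = ∑ j : Fin m, a j :=
    Finset.sum_filter_add_sum_filter_not _ _ _
  have hlow : k ≤ ∑ j ∈ univ.filter (fun j : Fin m => j.1 < k), a j := by
    rw [sum_low hkm]
    calc k = ∑ _i : Fin k, 1 := by simp
      _ ≤ ∑ i : Fin k, a (Fin.castLE hkm i) :=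
        Finset.sum_le_sum fun i _ => Nat.one_le_iff_ne_zero.mpr (hK i)
  have hhigh : (Tof hkm a).card ≤ ∑ j ∈ univ.filter (fun j : Fin m => ¬ j.1 < k), a j := by
    rw [sum_high hkm]
    calc (Tof hkm a).card = ∑ _j' ∈ Tof hkm a, 1 := by simp
      _ ≤ ∑ j' ∈ Tof hkm a, a (liftJ hkm j') := Finset.sum_le_sum fun j' hj' => by
          simp only [Tof, Finset.mem_filter] at hj'
          exact Nat.one_le_iff_ne_zero.mpr hj'.2
      _ ≤ ∑ j' : Fin (m - k), a (liftJ hkm j') :=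
          Finset.sum_le_sum_of_subset (Finset.subset_univ _)
  omega

lemma span_DDs_stdE (hkm : k ≤ m) {f : BF m} (hf : f ∈ RM m r) :
    ∃ c : {T : Finset (Fin (m - k)) // T.card ≤ r - k} → ZMod 2,
      ∀ w : Cube (m - k),
        DDs (stdE hkm) f (iotaC w)
          = ∑ T : {T : Finset (Fin (m - k)) // T.card ≤ r - k}, c T * Mon T.1 w := by
  classical
  obtain ⟨p, hdeg, hev⟩ := hf
  set Kf : (Fin m →₀ ℕ) → Prop := fun a => ∀ i : Fin k, a (Fin.castLE hkm i) ≠ 0 with hKf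
  set c : {T : Finset (Fin (m - k)) // T.card ≤ r - k} → ZMod 2 :=
    fun T => ∑ a ∈ p.support.filter (fun a => Kf a ∧ Tof hkm a = T.1),
      MvPolynomial.coeff a p with hc
  refine ⟨c, fun w => ?_⟩
  rw [DDs_eq_sum]
  -- coordinates of the argument
  have hcoordL : ∀ (S : Finset (Fin k)) (i : Fin k),
      (iotaC w + ∑ i' ∈ S, stdE hkm i') (Fin.castLE hkm i)
        = if i ∈ S then 1 else 0 := by
    intro S i
    rw [Pi.add_apply, eS_apply]
    have hlt : (Fin.castLE hkm i).1 < k := i.2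
    rw [dif_pos hlt]
    have h0 : iotaC w (Fin.castLE hkm i) = 0 := by
      rw [iotaC, dif_neg (by omega : ¬ k ≤ (Fin.castLE hkm i).1)]
    rw [h0, zero_add]
    congr 1
  have hcoordH : ∀ (S : Finset (Fin k)) (j' : Fin (m - k)),
      (iotaC w + ∑ i' ∈ S, stdE hkm i') (liftJ hkm j') = w j' := by
    intro S j'
    rw [Pi.add_apply, eS_apply]
    rw [dif_neg (by simp [liftJ])]
    rw [iotaC, dif_pos (by simp [liftJ] : k ≤ (liftJ hkm j').1), add_zero]
    congr 1
    exact Fin.ext (by simp [liftJ])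
  -- expand each f value via the polynomial
  have hterm : ∀ S : Finset (Fin k),
      f (iotaC w + ∑ i ∈ S, stdE hkm i)
        = ∑ a ∈ p.support, MvPolynomial.coeff a p
            * ∏ j : Fin m, ((iotaC w + ∑ i ∈ S, stdE hkm i) j) ^ a j := by
    intro S
    rw [← hev, MvPolynomial.eval_eq']
  rw [Finset.sum_congr rfl fun S _ => hterm S, Finset.sum_comm]
  -- compute the inner sums
  have hProd : ∀ (a : Fin m →₀ ℕ) (S : Finset (Fin k)),
      (∏ j : Fin m, ((iotaC w + ∑ i ∈ S, stdE hkm i) j) ^ a j)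
        = (∏ i : Fin k, ((if i ∈ S then (1 : ZMod 2) else 0)) ^ a (Fin.castLE hkm i))
          * ∏ j' : Fin (m - k), (w j') ^ a (liftJ hkm j') := by
    intro a S
    rw [← Finset.prod_filter_mul_prod_filter_not univ (fun j : Fin m => j.1 < k),
      prod_low hkm, prod_high hkm]
    congr 1
    · exact Finset.prod_congr rfl fun i _ => by rw [hcoordL S i]
    · exact Finset.prod_congr rfl fun j' _ => by rw [hcoordH S j']
  have hPhigh : ∀ a : Fin m →₀ ℕ,
      (∏ j' : Fin (m - k), (w j') ^ a (liftJ hkm j')) = Mon (Tof hkm a) w := by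
    intro a
    rw [← Finset.prod_filter_mul_prod_filter_not univ (fun j' => a (liftJ hkm j') ≠ 0)]
    have h2 : ∏ j' ∈ univ.filter (fun j' => ¬ a (liftJ hkm j') ≠ 0), (w j') ^ a (liftJ hkm j')
        = 1 := by
      refine Finset.prod_eq_one fun j' hj' => ?_
      simp only [Finset.mem_filter, not_not] at hj'
      rw [hj'.2, pow_zero]
    rw [h2, mul_one, Mon]
    refine Finset.prod_congr rfl fun j' hj' => ?_
    simp only [Tof, Finset.mem_filter] at hj'
    exact zmod2_pow _ hj'.2
  have hinner : ∀ a ∈ p.support,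
      (∑ S : Finset (Fin k), MvPolynomial.coeff a p
          * ∏ j : Fin m, ((iotaC w + ∑ i ∈ S, stdE hkm i) j) ^ a j)
        = if Kf a then MvPolynomial.coeff a p * Mon (Tof hkm a) w else 0 := by
    intro a _
    have : ∀ S : Finset (Fin k), MvPolynomial.coeff a p
        * ∏ j : Fin m, ((iotaC w + ∑ i ∈ S, stdE hkm i) j) ^ a j
        = MvPolynomial.coeff a p
            * ((∏ i : Fin k, ((if i ∈ S then (1 : ZMod 2) else 0)) ^ a (Fin.castLE hkm i))
              * Mon (Tof hkm a) w) := by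
      intro S
      rw [hProd a S, hPhigh a]
    rw [Finset.sum_congr rfl fun S _ => this S, ← Finset.mul_sum, ← Finset.sum_mul]
    by_cases hK : Kf a
    · rw [if_pos hK]
      have hPl : ∀ S : Finset (Fin k),
          (∏ i : Fin k, ((if i ∈ S then (1 : ZMod 2) else 0)) ^ a (Fin.castLE hkm i))
            = if S = univ then 1 else 0 := by
        intro S
        by_cases hS : S = univ
        · rw [if_pos hS, hS]
          refine Finset.prod_eq_one fun i _ => by simp
        · rw [if_neg hS]
          obtain ⟨i0, hi0⟩ : ∃ i, i ∉ S := by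
            by_contra hcon
            push_neg at hcon
            exact hS (Finset.eq_univ_iff_forall.mpr hcon)
          refine Finset.prod_eq_zero (Finset.mem_univ i0) ?_
          rw [if_neg hi0]
          exact zero_pow (hK i0)
      rw [Finset.sum_congr rfl fun S _ => hPl S,
        Finset.sum_ite_eq' (univ : Finset (Finset (Fin k))) univ (fun _ => (1 : ZMod 2)),
        if_pos (Finset.mem_univ _), one_mul]
    · rw [if_neg hK]
      have hzero : (∑ S : Finset (Fin k),
          ∏ i : Fin k, ((if i ∈ S then (1 : ZMod 2) else 0)) ^ a (Fin.castLE hkm i)) = 0 := by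
        obtain ⟨i0, hi0⟩ : ∃ i : Fin k, a (Fin.castLE hkm i) = 0 := by
          by_contra hcon
          push_neg at hcon
          exact hK hcon
        refine Finset.sum_involution (fun S _ => S ∆ ({i0} : Finset (Fin k))) ?_ ?_
          (fun S _ => Finset.mem_univ _) ?_
        · intro S _
          have heqP : (∏ i : Fin k,
              ((if i ∈ S ∆ ({i0} : Finset (Fin k)) then (1 : ZMod 2) else 0)) ^ a (Fin.castLE hkm i))
              = ∏ i : Fin k, ((if i ∈ S then (1 : ZMod 2) else 0)) ^ a (Fin.castLE hkm i) := by
            refine Finset.prod_congr rfl fun i _ => ?_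
            by_cases hi : i = i0
            · rw [hi, hi0, pow_zero, pow_zero]
            · have hiff : (i ∈ S ∆ ({i0} : Finset (Fin k))) ↔ (i ∈ S) := by
                simp [Finset.mem_symmDiff, hi]
              exact congrArg (fun z => z ^ a (Fin.castLE hkm i)) (if_congr hiff rfl rfl)
          rw [heqP]
          exact z2 _
        · intro S _ _ hST
          have h1 : ({i0} : Finset (Fin k)) = ⊥ := symmDiff_eq_left.mp hST
          exact Finset.singleton_ne_empty i0 h1
        · intro S _
          exact symmDiff_symmDiff_cancel_right ({i0} : Finset (Fin k)) S
      rw [hzero, zero_mul, mul_zero]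
  rw [Finset.sum_congr rfl hinner, ← Finset.sum_filter]
  -- regroup by fibers
  set TofSub : (Fin m →₀ ℕ) → {T : Finset (Fin (m - k)) // T.card ≤ r - k} :=
    fun a => if h : (Tof hkm a).card ≤ r - k then ⟨Tof hkm a, h⟩ else ⟨∅, by simp⟩ with hTofSub
  have hfib := Finset.sum_fiberwise (p.support.filter Kf) TofSub
    (fun a => MvPolynomial.coeff a p * Mon (Tof hkm a) w)
  rw [← hfib]
  refine Finset.sum_congr rfl fun T _ => ?_
  have hfilter : (p.support.filter Kf).filter (fun a => TofSub a = T)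
      = p.support.filter (fun a => Kf a ∧ Tof hkm a = T.1) := by
    ext a
    simp only [Finset.mem_filter, and_assoc]
    constructor
    · rintro ⟨ha, hKa, hTa⟩
      refine ⟨ha, hKa, ?_⟩
      have hcard := card_Tof_le hkm hdeg ha hKa
      rw [hTofSub] at hTa
      simp only [dif_pos hcard] at hTa
      exact congrArg Subtype.val hTa
    · rintro ⟨ha, hKa, hTa⟩
      refine ⟨ha, hKa, ?_⟩
      have hcard := card_Tof_le hkm hdeg ha hKa
      rw [hTofSub]
      simp only [dif_pos hcard]
      exact Subtype.ext hTa
  rw [hfilter, hc, Finset.sum_mul]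
  refine Finset.sum_congr rfl fun a ha => ?_
  simp only [Finset.mem_filter] at ha
  rw [ha.2.2]

end Part5

namespace Part6
open AnetAux Part2

lemma exists_iso {m k : ℕ} (hkm : k ≤ m) (Z : Fin k → Cube m)
    (hZ : LinearIndependent (ZMod 2) Z) :
    ∃ A : Cube m ≃ₗ[ZMod 2] Cube m, ∀ i, A (stdE hkm i) = Z i := by
  classical
  haveI : Fintype (Module.Basis.sumExtendIndex hZ) := (Set.toFinite _).fintype
  set b0 : Module.Basis (Fin k ⊕ Module.Basis.sumExtendIndex hZ) (ZMod 2) (Cube m) := Module.Basis.sumExtend hZ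
    with hb0
  have hcards : k + Fintype.card (Module.Basis.sumExtendIndex hZ) = m := by
    have h1 : Module.finrank (ZMod 2) (Cube m) = Fintype.card (Fin k ⊕ Module.Basis.sumExtendIndex hZ) :=
      Module.finrank_eq_card_basis b0
    rw [Module.finrank_pi] at h1
    simpa [Fintype.card_sum] using h1.symm
  have hcard2 : Fintype.card (Module.Basis.sumExtendIndex hZ) = m - k := by omega
  set eIdx : Module.Basis.sumExtendIndex hZ ≃ Fin (m - k) := Fintype.equivFinOfCardEq hcard2 with heIdx
  set e2 : (Fin k ⊕ Module.Basis.sumExtendIndex hZ) ≃ Fin m :=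
    (Equiv.sumCongr (Equiv.refl (Fin k)) eIdx).trans
      (finSumFinEquiv.trans (finCongr (by omega : k + (m - k) = m))) with he2
  set b : Module.Basis (Fin m) (ZMod 2) (Cube m) := b0.reindex e2 with hb
  refine ⟨(Pi.basisFun (ZMod 2) (Fin m)).equiv b (Equiv.refl _), fun i => ?_⟩
  have hstd : stdE hkm i = Pi.basisFun (ZMod 2) (Fin m) (Fin.castLE hkm i) := by
    rw [stdE, Pi.basisFun_apply]
  rw [hstd, Module.Basis.equiv_apply, Equiv.refl_apply]
  have he2i : e2 (Sum.inl i) = Fin.castLE hkm i := by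
    rw [he2]
    apply Fin.ext
    simp [finSumFinEquiv]
  have : b (Fin.castLE hkm i) = b0 (Sum.inl i) := by
    rw [hb, Module.Basis.reindex_apply, ← he2i, Equiv.symm_apply_apply]
  rw [this, hb0]
  rw [show (Module.Basis.sumExtend hZ) (Sum.inl i)
      = (Module.Basis.extend hZ.linearIndepOn_id).reindex (Equiv.symm (calc
          Fin k ⊕ (↥((hZ.linearIndepOn_id.extend (Set.subset_univ (Set.range Z))) \ Set.range Z))
            ≃ (Set.range Z) ⊕ (↥((hZ.linearIndepOn_id.extend (Set.subset_univ (Set.range Z))) \ Set.range Z)) :=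
              Equiv.sumCongr (Equiv.ofInjective Z hZ.injective) (Equiv.refl _)
          _ ≃ (hZ.linearIndepOn_id.extend (Set.subset_univ (Set.range Z))) :=
              haveI := Classical.decPred (· ∈ Set.range Z)
              Equiv.Set.sumDiffSubset (hZ.linearIndepOn_id.subset_extend _))) (Sum.inl i)
      from rfl]
  rw [Module.Basis.reindex_apply, Equiv.symm_symm]
  haveI := Classical.decPred (· ∈ Set.range Z)
  show (Module.Basis.extend hZ.linearIndepOn_id)
      ((Equiv.Set.sumDiffSubset (hZ.linearIndepOn_id.subset_extend _))
        (Sum.inl ((Equiv.ofInjective Z hZ.injective) i))) = Z i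
  rw [Module.Basis.extend_apply_self, Equiv.Set.sumDiffSubset_apply_inl]
  rfl

end Part6


namespace Part7
open AnetAux Part2 Part3 Part4 Part5 Part6

open scoped Classical in
noncomputable def decode (m r k : ℕ) (hkm : k ≤ m) (Z : Fin k → Cube m)
    (c : {T : Finset (Fin (m - k)) // T.card ≤ r - k} → ZMod 2) : BF m :=
  if h : ∃ A : Cube m ≃ₗ[ZMod 2] Cube m, ∀ i, A (stdE hkm i) = Z i then
    fun x => ∑ T : {T : Finset (Fin (m - k)) // T.card ≤ r - k},
      c T * Mon T.1 (resC hkm (h.choose.symm x))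
  else fun _ => 0

lemma decode_surj {m r k : ℕ} (hkm : k ≤ m) (Z : Fin k → Cube m)
    {f : BF m} (hf : f ∈ RM m r) :
    ∃ c, decode m r k hkm Z c = DDs Z f := by
  by_cases hZ : LinearIndependent (ZMod 2) Z
  · have h : ∃ A : Cube m ≃ₗ[ZMod 2] Cube m, ∀ i, A (stdE hkm i) = Z i := exists_iso hkm Z hZ
    have hAspec := h.choose_spec
    set A := h.choose with hA
    have hf' : (fun v => f (A v)) ∈ RM m r :=
      RM_comp_linear (A : Cube m →ₗ[ZMod 2] Cube m) hf
    obtain ⟨c, hcspec⟩ := span_DDs_stdE (r := r) hkm hf'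
    refine ⟨c, ?_⟩
    funext x
    rw [decode, dif_pos h]
    have h1 : DDs Z f x = DDs (stdE hkm) (fun v => f (A v)) (A.symm x) := by
      conv_lhs => rw [show x = A (A.symm x) from (A.apply_symm_apply x).symm]
      exact DDs_comp_linear hkm Z A hAspec f (A.symm x)
    rw [h1, DDs_stdE_invariant hkm, hcspec (resC hkm (A.symm x))]
  · refine ⟨fun _ => 0, ?_⟩
    funext x
    have hr : DDs Z f x = 0 := DDs_eq_zero_of_dep Z hZ f x
    rw [hr, decode]
    split
    · simp
    · rfl

lemma card_subtype (n d : ℕ) :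
    Fintype.card {T : Finset (Fin n) // T.card ≤ d} = binomLe n d := by
  classical
  rw [Fintype.card_subtype]
  have hsplit : (univ.filter fun T : Finset (Fin n) => T.card ≤ d)
      = (Finset.range (d + 1)).biUnion
          (fun i => univ.filter fun T : Finset (Fin n) => T.card = i) := by
    ext T
    simp only [Finset.mem_filter, Finset.mem_univ, true_and, Finset.mem_biUnion,
      Finset.mem_range]
    constructor
    · intro hT; exact ⟨T.card, by omega, rfl⟩
    · rintro ⟨i, hi, rfl⟩; omega
  rw [hsplit, Finset.card_biUnion]
  · refine Finset.sum_congr rfl fun i _ => ?_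
    have : (univ.filter fun T : Finset (Fin n) => T.card = i)
        = Finset.powersetCard i (univ : Finset (Fin n)) := by
      rw [Finset.powersetCard_eq_filter, Finset.powerset_univ]
    rw [this, Finset.card_powersetCard, Finset.card_univ, Fintype.card_fin]
  · intro i _ j _ hij
    simp only [Finset.disjoint_left, Finset.mem_filter]
    rintro T ⟨-, rfl⟩ ⟨-, h⟩
    exact hij h

theorem Anet_card_bound' (m r k t : ℕ) (hkr : k ≤ r) (hrm : r ≤ m) :
    (Anet m r k t).ncard ≤ 2 ^ (m * t * k + t * binomLe (m - k) (r - k)) := by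
  classical
  have hkm : k ≤ m := hkr.trans hrm
  set F : ((Fin t → Fin k → Cube m)
      × (Fin t → ({T : Finset (Fin (m - k)) // T.card ≤ r - k} → ZMod 2))) → BF m :=
    fun P x => Maj (fun i => decode m r k hkm (P.1 i) (P.2 i) x) with hF
  have hsub : Anet m r k t ⊆ Set.range F := by
    rintro g ⟨f, hf, Y, rfl⟩
    have hc : ∀ i : Fin t, ∃ c, decode m r k hkm (Y i) c = DDs (Y i) f :=
      fun i => decode_surj hkm (Y i) hf
    choose cs hcs using hc
    refine ⟨(Y, cs), ?_⟩
    funext x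
    rw [hF]
    simp only
    congr 1
    funext i
    rw [hcs i]
  have h1 : (Anet m r k t).ncard ≤ (Set.range F).ncard :=
    Set.ncard_le_ncard hsub (Set.toFinite _)
  have h2 : (Set.range F).ncard ≤ Fintype.card ((Fin t → Fin k → Cube m)
      × (Fin t → ({T : Finset (Fin (m - k)) // T.card ≤ r - k} → ZMod 2))) := by
    rw [← Set.image_univ]
    refine (Set.ncard_image_le (Set.toFinite _)).trans ?_
    rw [Set.ncard_univ, Nat.card_eq_fintype_card]
  refine h1.trans (h2.trans ?_)
  have hCube : Fintype.card (Cube m) = 2 ^ m := by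
    rw [Fintype.card_fun, ZMod.card, Fintype.card_fin]
  have hCsp : Fintype.card ({T : Finset (Fin (m - k)) // T.card ≤ r - k} → ZMod 2)
      = 2 ^ binomLe (m - k) (r - k) := by
    rw [Fintype.card_fun, ZMod.card, card_subtype]
  have hY : Fintype.card (Fin t → Fin k → Cube m) = 2 ^ (m * t * k) := by
    rw [Fintype.card_fun, Fintype.card_fun, hCube, Fintype.card_fin, Fintype.card_fin,
      ← pow_mul, ← pow_mul]
    ring_nf
  have hCs : Fintype.card (Fin t → ({T : Finset (Fin (m - k)) // T.card ≤ r - k} → ZMod 2))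
      = 2 ^ (t * binomLe (m - k) (r - k)) := by
    rw [Fintype.card_fun, hCsp, Fintype.card_fin, ← pow_mul]
    ring_nf
  rw [Fintype.card_prod, hY, hCs, ← pow_add]

end Part7

/-- |A_{k,t}| ≤ 2^{mtk + t·binom(m-k, ≤ r-k)}
(Proposition `bound for derivatives from asw`). -/
theorem Anet_card_bound (m r k t : ℕ) (ht : 1 ≤ t) (hk : 1 ≤ k) (hkr : k ≤ r)
    (hrm : r ≤ m) :
    (Anet m r k t).ncard ≤ 2 ^ (m * t * k + t * binomLe (m - k) (r - k)) := by
  exact Part7.Anet_card_bound' m r k t hkr hrm
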